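/- Let G be a finite group and let ω : G → G → ℂˣ be a 2-cocycle with trivial G-action, i.e. ω(g,h)·ω(g·h,k) = ω(h,k)·ω(g,h·k) for all g, h, k ∈ G. Then ω is cohomologous to a unit-modulus cocycle: there exist a 2-cocycle u : G → G → U(1) valued in the circle group (satisfying the same cocycle identity) and a function τ : G → ℝ_{>0} such that ω(g,h) = u(g,h)·τ(g)·τ(h)·τ(g·h)⁻¹ in ℂˣ for all g, h ∈ G. -/

import Mathlib

open scoped NNReal

/-- **Every `ℂˣ`-valued 2-cocycle on a finite group is cohomologous to a unit-modulus
cocycle** (the degree-2 surjectivity statement of the paper's 'cohomological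
perspective'). There exist a circle-valued 2-cocycle `u` and `τ : G → ℝ_{>0}` with
`ω(g,h) = u(g,h) · τ(g) · τ(h) · τ(gh)⁻¹` in `ℂ`. -/
theorem cocycle_cohomologous_to_circle {G : Type*} [Group G] [Finite G]
    (ω : G → G → ℂˣ)
    (hω : ∀ g h k : G, ω g h * ω (g * h) k = ω h k * ω g (h * k)) :
    ∃ u : G → G → Circle,
      (∀ g h k : G, u g h * u (g * h) k = u h k * u g (h * k)) ∧
      ∃ τ : G → ℝ≥0ˣ, ∀ g h : G,
        ((ω g h : ℂˣ) : ℂ)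
          = (u g h : ℂ) * (((τ g : ℝ≥0) : ℝ) : ℂ) * (((τ h : ℝ≥0) : ℝ) : ℂ)
            * ((((τ (g * h) : ℝ≥0) : ℝ) : ℂ))⁻¹ := by
  classical
  haveI : Fintype G := Fintype.ofFinite G
  set n : ℕ := Fintype.card G with hn
  have hnn : n ≠ 0 := Fintype.card_ne_zero
  have hn0 : (n : ℝ) ≠ 0 := Nat.cast_ne_zero.mpr hnn
  set r : G → G → ℝ := fun g h => ‖((ω g h : ℂˣ) : ℂ)‖ with hrdef
  have hrpos : ∀ g h, 0 < r g h := fun g h =>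
    norm_pos_iff.mpr (Units.ne_zero (ω g h))
  have hrc : ∀ g h k : G, r g h * r (g * h) k = r h k * r g (h * k) := by
    intro g h k
    have := congrArg (fun z : ℂˣ => ‖(z : ℂ)‖) (hω g h k)
    simpa [hrdef, map_mul] using this
  set σ : G → ℝ := fun g => ∏ k : G, r g k with hσdef
  have hσpos : ∀ g, 0 < σ g := fun g => Finset.prod_pos fun k _ => hrpos g k
  have key : ∀ g h, (r g h) ^ n * σ (g * h) = σ g * σ h := by
    intro g h
    have this1 := Finset.prod_congr rfl (fun k (_ : k ∈ (Finset.univ : Finset G)) => hrc g h k)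
    rw [Finset.prod_mul_distrib, Finset.prod_mul_distrib, Finset.prod_const] at this1
    have hre : ∏ k : G, r g (h * k) = σ g :=
      Fintype.prod_equiv (Equiv.mulLeft h) _ _ (fun k => rfl)
    rw [hre, Finset.card_univ] at this1
    calc (r g h) ^ n * σ (g * h) = (∏ k : G, r h k) * σ g := this1
    _ = σ g * σ h := by rw [hσdef]; ring
  set τ' : G → ℝ := fun g => (σ g) ^ ((n : ℝ)⁻¹) with hτdef
  have hτpos : ∀ g, 0 < τ' g := fun g => Real.rpow_pos_of_pos (hσpos g) _
  have hτpow : ∀ g, (τ' g) ^ n = σ g := by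
    intro g
    rw [hτdef]
    rw [← Real.rpow_natCast ((σ g) ^ ((n:ℝ)⁻¹)) n, ← Real.rpow_mul (hσpos g).le,
      inv_mul_cancel₀ hn0, Real.rpow_one]
  have hrτ : ∀ g h, r g h = τ' g * τ' h / τ' (g * h) := by
    intro g h
    have h1 : (r g h) ^ n = (τ' g * τ' h / τ' (g * h)) ^ n := by
      rw [div_pow, mul_pow, hτpow, hτpow, hτpow]
      rw [eq_div_iff (hσpos (g*h)).ne']
      exact key g h
    exact (pow_left_inj₀ (hrpos g h).le
      (by positivity) hnn).mp h1
  -- circle part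
  refine ⟨fun g h => ⟨((ω g h : ℂˣ) : ℂ) * ((r g h : ℝ) : ℂ)⁻¹, ?_⟩, ?_, ?_⟩
  · refine mem_sphere_zero_iff_norm.mpr ?_
    rw [norm_mul, norm_inv, Complex.norm_real, Real.norm_eq_abs, abs_of_pos (hrpos g h)]
    show ‖_‖ * _ = 1
    exact mul_inv_cancel₀ (hrpos g h).ne'
  · intro g h k
    ext
    push_cast [Circle.coe_mul]
    have hωc : ((ω g h : ℂˣ) : ℂ) * ((ω (g*h) k : ℂˣ) : ℂ)
        = ((ω h k : ℂˣ) : ℂ) * ((ω g (h*k) : ℂˣ) : ℂ) := by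
      exact_mod_cast congrArg (fun z : ℂˣ => (z : ℂ)) (hω g h k)
    have hrc' := hrc g h k
    have h2 : ((r g h : ℝ) : ℂ) * ((r (g*h) k : ℝ) : ℂ)
        = ((r h k : ℝ) : ℂ) * ((r g (h*k) : ℝ) : ℂ) := by exact_mod_cast hrc'
    calc ((ω g h : ℂˣ) : ℂ) * (((r g h : ℝ) : ℂ))⁻¹ * (((ω (g*h) k : ℂˣ) : ℂ) * (((r (g*h) k : ℝ) : ℂ))⁻¹)
        = ((ω g h : ℂˣ) : ℂ) * ((ω (g*h) k : ℂˣ) : ℂ) * (((r g h : ℝ) : ℂ) * ((r (g*h) k : ℝ) : ℂ))⁻¹ := by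
          rw [mul_inv]; ring
    _ = ((ω h k : ℂˣ) : ℂ) * ((ω g (h*k) : ℂˣ) : ℂ) * (((r h k : ℝ) : ℂ) * ((r g (h*k) : ℝ) : ℂ))⁻¹ := by
          rw [hωc, h2]
    _ = ((ω h k : ℂˣ) : ℂ) * ((r h k : ℝ) : ℂ)⁻¹ * (((ω g (h*k) : ℂˣ) : ℂ) * ((r g (h*k) : ℝ) : ℂ)⁻¹) := by rw [mul_inv]; ring
    _ = _ := rfl
  · refine ⟨fun g => Units.mk0 ⟨τ' g, (hτpos g).le⟩
      (ne_of_gt (show (0:ℝ≥0) < ⟨τ' g, (hτpos g).le⟩ from NNReal.coe_pos.mp (hτpos g))), fun g h => ?_⟩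
    have hr0 : ((r g h : ℝ) : ℂ) ≠ 0 := by exact_mod_cast (hrpos g h).ne'
    have hτ0 : ((τ' (g*h) : ℝ) : ℂ) ≠ 0 := by exact_mod_cast (hτpos (g*h)).ne'
    show ((ω g h : ℂˣ) : ℂ) = ((ω g h : ℂˣ) : ℂ) * ((r g h : ℝ) : ℂ)⁻¹
      * ((τ' g : ℝ) : ℂ) * ((τ' h : ℝ) : ℂ) * ((τ' (g*h) : ℝ) : ℂ)⁻¹
    have : ((r g h : ℝ) : ℂ) = ((τ' g : ℝ) : ℂ) * ((τ' h : ℝ) : ℂ) / ((τ' (g*h) : ℝ) : ℂ) := by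
      exact_mod_cast congrArg (fun x : ℝ => (x : ℂ)) (hrτ g h)
    have hτg : ((τ' g : ℝ) : ℂ) ≠ 0 := by exact_mod_cast (hτpos g).ne'
    have hτh : ((τ' h : ℝ) : ℂ) ≠ 0 := by exact_mod_cast (hτpos h).ne'
    rw [this]
    field_simp
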